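/- Fix n ∈ ℕ and an orthonormal basis {Λ(f_i)}_{i=1}^{n²} of L²(M_n). Let ∂ be the linear operator on L²(M_n) determined by ∂(Λ(f_i^*)) = Λ(f_i) for all i (well-defined and invertible since {Λ(f_i^*)}_i is also an orthonormal basis). Let 𝔣 be the flip on L²(M_n)⊗L²(M_n) (𝔣(u⊗v) = v⊗u), let 𝔡 be the conjugate-linear map on L²(M_n)⊗L²(M_n) sending ∑_{i,j} α_{i,j}·Λ(f_i)⊗Λ(f_j) to ∑_{i,j} conj(α_{i,j})·Λ(f_i)⊗Λ(f_j), and let J₀ be the conjugate-linear map determined by J₀(Λ(x)⊗Λ(y)) = Λ(y^*)⊗Λ(x^*). Let 𝒲 ⊆ L²(M_n)⊗L²(M_n) be a subspace and set 𝒰 := (∂^{-1}⊗1)(𝒲). Then the following are equivalent: (i) (𝔡∘𝔣)(𝒲) = 𝒲; (ii) J₀(𝒰) = 𝒰; (iii) the subspace Ψ^{-1}(𝒰) of B(L²(M_n)) (where 𝒰 is viewed inside M_n⊗M_n via Λ⊗Λ) is self-adjoint, i.e., closed under the adjoint T ↦ T^*. -/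

import Mathlib

open scoped ComplexOrder
open scoped Kronecker
open Matrix

noncomputable section

/-- Matrix units in `M_n`. -/
def eps {n : ℕ} (i j : Fin n) : Matrix (Fin n) (Fin n) ℂ := Matrix.single i j 1

/-- The linear isomorphism `Ψ : B(L²(M_n)) → M_n ⊗ M_n`, determined by
`Ψ(Θ_{Λ(x),Λ(y)}) = x^* ⊗ y`; in closed form `Ψ(T) = n ∑_{i,j} ε_{i,j}^* ⊗ T(ε_{i,j})`.
Here `L²(M_n) ⊗ L²(M_n)` is identified with `Matrix (Fin n × Fin n) (Fin n × Fin n) ℂ`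
via `Λ(x) ⊗ Λ(y) ↦ x ⊗ₖ y`. -/
def Psi (n : ℕ) (T : Matrix (Fin n) (Fin n) ℂ → Matrix (Fin n) (Fin n) ℂ) :
    Matrix (Fin n × Fin n) (Fin n × Fin n) ℂ :=
  (n : ℂ) • ∑ i, ∑ j, (eps i j)ᴴ ⊗ₖ (T (eps i j))

/-- The flip `𝔣` of `L²(M_n) ⊗ L²(M_n)`: `𝔣(Λ(x) ⊗ Λ(y)) = Λ(y) ⊗ Λ(x)`. -/
def flipT {n : ℕ} (M : Matrix (Fin n × Fin n) (Fin n × Fin n) ℂ) :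
    Matrix (Fin n × Fin n) (Fin n × Fin n) ℂ :=
  Matrix.of fun p q => M (p.2, p.1) (q.2, q.1)

/-- The conjugate-linear map `J₀`: `J₀(Λ(x) ⊗ Λ(y)) = Λ(y^*) ⊗ Λ(x^*)`. -/
def J0map {n : ℕ} (M : Matrix (Fin n × Fin n) (Fin n × Fin n) ℂ) :
    Matrix (Fin n × Fin n) (Fin n × Fin n) ℂ :=
  Matrix.of fun p q => (starRingEnd ℂ) (M (q.2, q.1) (p.2, p.1))

/-- The coefficient of `Λ(f_i) ⊗ Λ(f_j)` in `W`, with respect to the inner product of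
`L²(M_n) ⊗ L²(M_n)` (which in the Kronecker coordinates is `(1/n²)·` Frobenius). -/
def coeff {n : ℕ} (f : Fin (n ^ 2) → Matrix (Fin n) (Fin n) ℂ) (i j : Fin (n ^ 2))
    (W : Matrix (Fin n × Fin n) (Fin n × Fin n) ℂ) : ℂ :=
  ((n : ℂ) ^ 2)⁻¹ * ∑ p : Fin n × Fin n, ∑ q : Fin n × Fin n,
    (starRingEnd ℂ) ((f i ⊗ₖ f j) p q) * W p q

/-- The conjugate-linear map `𝔡`, conjugating the coefficients with respect to the basis
`{Λ(f_i) ⊗ Λ(f_j)}`. -/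
def dmap {n : ℕ} (f : Fin (n ^ 2) → Matrix (Fin n) (Fin n) ℂ)
    (W : Matrix (Fin n × Fin n) (Fin n × Fin n) ℂ) :
    Matrix (Fin n × Fin n) (Fin n × Fin n) ℂ :=
  ∑ i, ∑ j, (starRingEnd ℂ) (coeff f i j W) • (f i ⊗ₖ f j)

/-- For `T : L²(M_n) → L²(M_n)`, the operator `T ⊗ 1` on `L²(M_n) ⊗ L²(M_n)`. -/
def tensorFirst {n : ℕ} (T : Matrix (Fin n) (Fin n) ℂ → Matrix (Fin n) (Fin n) ℂ)
    (W : Matrix (Fin n × Fin n) (Fin n × Fin n) ℂ) :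
    Matrix (Fin n × Fin n) (Fin n × Fin n) ℂ :=
  Matrix.of fun p q => T (Matrix.of fun i k => W (i, p.2) (k, q.2)) p.1 q.1

/-- The adjoint of `T` with respect to the `L²(M_n)` inner product `⟨a,b⟩ = tr(a^* b)`,
in closed form. -/
def adjMap {n : ℕ} (T : Matrix (Fin n) (Fin n) ℂ → Matrix (Fin n) (Fin n) ℂ)
    (a : Matrix (Fin n) (Fin n) ℂ) : Matrix (Fin n) (Fin n) ℂ :=
  ∑ i, ∑ j, (Matrix.trace ((T (eps i j))ᴴ * a)) • eps i j

set_option linter.unusedSectionVars false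

variable {n : ℕ} (f : Fin (n ^ 2) → Matrix (Fin n) (Fin n) ℂ)
  (hON : ∀ i j, Matrix.trace ((f i)ᴴ * f j) / (n : ℂ) = if i = j then 1 else 0)

lemma trace_conjT_mul (X Y : Matrix (Fin n) (Fin n) ℂ) :
    Matrix.trace (Xᴴ * Y) = ∑ a, ∑ c, (starRingEnd ℂ) (X a c) * Y a c := by
  simp [Matrix.trace, Matrix.mul_apply, Matrix.conjTranspose_apply, Matrix.diag]
  rw [Finset.sum_comm]

include hON in
lemma f_indep : LinearIndependent ℂ f := by
  rw [Fintype.linearIndependent_iff]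
  intro g hg j
  have h := congrArg (fun x => Matrix.trace ((f j)ᴴ * x) / (n : ℂ)) hg
  simp only [Matrix.mul_sum, Matrix.mul_smul, Matrix.trace_sum, Matrix.trace_smul, Matrix.mul_zero,
    Matrix.trace_zero, zero_div, Finset.sum_div, smul_eq_mul, mul_div_assoc] at h
  simp only [hON, mul_ite, mul_one, mul_zero, Finset.sum_ite_eq, Finset.mem_univ,
    if_true] at h
  exact h

include hON in
lemma f_card : Fintype.card (Fin (n ^ 2)) = Module.finrank ℂ (Matrix (Fin n) (Fin n) ℂ) := by
  simp [Module.finrank_matrix]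
  ring

set_option linter.unusedSectionVars false

variable (hn : n ≠ 0)

include hON hn in
lemma expand_small (x : Matrix (Fin n) (Fin n) ℂ) :
    ∑ i, (Matrix.trace ((f i)ᴴ * x) / (n : ℂ)) • f i = x := by
  haveI : Nonempty (Fin (n ^ 2)) := ⟨⟨0, by positivity⟩⟩
  let b := basisOfLinearIndependentOfCardEqFinrank (f_indep f hON) (f_card f hON)
  have hb : ⇑b = f := coe_basisOfLinearIndependentOfCardEqFinrank _ _
  let L : Matrix (Fin n) (Fin n) ℂ →ₗ[ℂ] Matrix (Fin n) (Fin n) ℂ :=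
    { toFun := fun x => ∑ i, (Matrix.trace ((f i)ᴴ * x) / (n : ℂ)) • f i
      map_add' := by
        intro x y
        simp [Matrix.mul_add, add_div, add_smul, Finset.sum_add_distrib]
      map_smul' := by
        intro c x
        simp only [Matrix.mul_smul, Matrix.trace_smul, smul_eq_mul, mul_div_assoc,
          Finset.smul_sum, RingHom.id_apply, smul_smul] }
  have : L = LinearMap.id := by
    apply b.ext
    intro k
    simp only [hb, L, LinearMap.coe_mk, AddHom.coe_mk, LinearMap.id_coe, id_eq]
    simp [hON, ite_smul]
  exact DFunLike.congr_fun this x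

lemma kron_pair (x y z w : Matrix (Fin n) (Fin n) ℂ) :
    ∑ p : Fin n × Fin n, ∑ q : Fin n × Fin n,
      (starRingEnd ℂ) ((x ⊗ₖ y) p q) * ((z ⊗ₖ w) p q)
    = (∑ a, ∑ c, (starRingEnd ℂ) (x a c) * z a c) *
      (∑ b, ∑ d, (starRingEnd ℂ) (y b d) * w b d) := by
  simp only [Fintype.sum_prod_type, Matrix.kroneckerMap_apply, _root_.map_mul]
  have swap : ∀ (F : Fin n → Fin n → Fin n → Fin n → ℂ),
      ∑ p1, ∑ p2, ∑ q1, ∑ q2, F p1 p2 q1 q2 = ∑ p1, ∑ q1, ∑ p2, ∑ q2, F p1 p2 q1 q2 :=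
    fun F => Finset.sum_congr rfl (fun p1 _ => Finset.sum_comm)
  rw [swap]
  calc ∑ p1, ∑ q1, ∑ p2, ∑ q2,
        (starRingEnd ℂ) (x p1 q1) * (starRingEnd ℂ) (y p2 q2) * (z p1 q1 * w p2 q2)
      = ∑ p1, ∑ q1, ((starRingEnd ℂ) (x p1 q1) * z p1 q1) *
          ∑ p2, ∑ q2, (starRingEnd ℂ) (y p2 q2) * w p2 q2 := by
        refine Finset.sum_congr rfl fun p1 _ => Finset.sum_congr rfl fun q1 _ => ?_
        rw [Finset.mul_sum]
        refine Finset.sum_congr rfl fun p2 _ => ?_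
        rw [Finset.mul_sum]
        refine Finset.sum_congr rfl fun q2 _ => ?_
        ring
    _ = (∑ a, ∑ c, (starRingEnd ℂ) (x a c) * z a c) *
          (∑ b, ∑ d, (starRingEnd ℂ) (y b d) * w b d) := by
        rw [Finset.sum_mul]
        refine Finset.sum_congr rfl fun a _ => ?_
        rw [Finset.sum_mul]

include hON hn in
lemma trace_f (i k : Fin (n ^ 2)) :
    Matrix.trace ((f i)ᴴ * f k) = if i = k then (n : ℂ) else 0 := by
  have h := hON i k
  have hn' : (n : ℂ) ≠ 0 := Nat.cast_ne_zero.mpr hn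
  field_simp at h
  rw [h, mul_ite, mul_one, mul_zero]

include hON hn in
lemma coeff_kron (i j k l : Fin (n ^ 2)) :
    coeff f i j (f k ⊗ₖ f l) = (if i = k then 1 else 0) * (if j = l then 1 else 0) := by
  have hn' : (n : ℂ) ≠ 0 := Nat.cast_ne_zero.mpr hn
  unfold coeff
  rw [kron_pair]
  rw [← trace_conjT_mul, ← trace_conjT_mul, trace_f f hON hn, trace_f f hON hn]
  split <;> split <;> field_simp <;> ring

lemma coeff_smul (i j : Fin (n ^ 2)) (c : ℂ) (W : Matrix (Fin n × Fin n) (Fin n × Fin n) ℂ) :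
    coeff f i j (c • W) = c * coeff f i j W := by
  unfold coeff
  simp only [Matrix.smul_apply, smul_eq_mul, Finset.mul_sum]
  refine Finset.sum_congr rfl fun p _ => Finset.sum_congr rfl fun q _ => ?_
  ring

lemma coeff_add (i j : Fin (n ^ 2)) (W V : Matrix (Fin n × Fin n) (Fin n × Fin n) ℂ) :
    coeff f i j (W + V) = coeff f i j W + coeff f i j V := by
  unfold coeff
  simp only [Matrix.add_apply, mul_add, Finset.sum_add_distrib]

lemma coeff_sum {α : Type*} (s : Finset α) (F : α → Matrix (Fin n × Fin n) (Fin n × Fin n) ℂ)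
    (i j : Fin (n ^ 2)) :
    coeff f i j (∑ a ∈ s, F a) = ∑ a ∈ s, coeff f i j (F a) := by
  classical
  induction s using Finset.induction_on with
  | empty =>
      simp only [Finset.sum_empty]
      unfold coeff; simp
  | @insert a s h ih =>
      rw [Finset.sum_insert h, Finset.sum_insert h, coeff_add, ih]

include hON hn in
lemma big_indep :
    LinearIndependent ℂ (fun ij : Fin (n ^ 2) × Fin (n ^ 2) => f ij.1 ⊗ₖ f ij.2) := by
  rw [Fintype.linearIndependent_iff]
  intro g hg ⟨i, j⟩
  have h := congrArg (coeff f i j) hg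
  rw [coeff_sum] at h
  simp only [coeff_smul, coeff_kron f hON hn] at h
  unfold coeff at h
  simp only [Matrix.zero_apply, mul_zero, Finset.sum_const_zero] at h
  rw [Fintype.sum_prod_type] at h
  simp only [mul_ite, mul_one, mul_zero, ite_mul, zero_mul, one_mul,
    Finset.sum_ite_eq, Finset.mem_univ, if_true] at h
  simpa using h

include hON hn in
lemma big_expand (W : Matrix (Fin n × Fin n) (Fin n × Fin n) ℂ) :
    ∑ i, ∑ j, coeff f i j W • (f i ⊗ₖ f j) = W := by
  haveI : Nonempty (Fin (n ^ 2) × Fin (n ^ 2)) :=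
    ⟨⟨⟨0, by positivity⟩, ⟨0, by positivity⟩⟩⟩
  have hcard : Fintype.card (Fin (n ^ 2) × Fin (n ^ 2))
      = Module.finrank ℂ (Matrix (Fin n × Fin n) (Fin n × Fin n) ℂ) := by
    simp [Module.finrank_matrix]
    ring
  let b := basisOfLinearIndependentOfCardEqFinrank (big_indep f hON hn) hcard
  have hb : ⇑b = fun ij : Fin (n ^ 2) × Fin (n ^ 2) => f ij.1 ⊗ₖ f ij.2 :=
    coe_basisOfLinearIndependentOfCardEqFinrank _ _
  let L : Matrix (Fin n × Fin n) (Fin n × Fin n) ℂ →ₗ[ℂ]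
      Matrix (Fin n × Fin n) (Fin n × Fin n) ℂ :=
    { toFun := fun W => ∑ i, ∑ j, coeff f i j W • (f i ⊗ₖ f j)
      map_add' := by
        intro x y
        simp [coeff_add, add_smul, Finset.sum_add_distrib]
      map_smul' := by
        intro c x
        simp [coeff_smul, smul_smul, Finset.smul_sum]
  }
  have : L = LinearMap.id := by
    apply b.ext
    intro ⟨k, l⟩
    simp only [hb, L, LinearMap.coe_mk, AddHom.coe_mk, LinearMap.id_coe, id_eq]
    simp only [coeff_kron f hON hn, ite_mul, one_mul, zero_mul, ite_smul, zero_smul]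
    simp [Finset.sum_ite_eq]
  exact DFunLike.congr_fun this W

lemma coeff_flip (i j : Fin (n ^ 2)) (W : Matrix (Fin n × Fin n) (Fin n × Fin n) ℂ) :
    coeff f i j (flipT W) = coeff f j i W := by
  unfold coeff flipT
  congr 1
  simp only [Fintype.sum_prod_type, Matrix.kroneckerMap_apply, Matrix.of_apply, _root_.map_mul]
  conv_lhs => rw [Finset.sum_comm]
  refine Finset.sum_congr rfl fun a _ => Finset.sum_congr rfl fun b _ => ?_
  conv_lhs => rw [Finset.sum_comm]
  refine Finset.sum_congr rfl fun c _ => Finset.sum_congr rfl fun d _ => ?_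
  ring

variable (E : Matrix (Fin n) (Fin n) ℂ ≃ₗ[ℂ] Matrix (Fin n) (Fin n) ℂ)

lemma tensorFirst_smul (c : ℂ) (W : Matrix (Fin n × Fin n) (Fin n × Fin n) ℂ) :
    tensorFirst (fun x => E x) (c • W) = c • tensorFirst (fun x => E x) W := by
  ext p q
  simp only [tensorFirst, Matrix.of_apply, Matrix.smul_apply]
  rw [show (Matrix.of fun i k => c • W (i, p.2) (k, q.2))
      = c • Matrix.of (fun i k => W (i, p.2) (k, q.2)) from by ext i k; simp,
    _root_.map_smul]
  simp

lemma tensorFirst_sum {α : Type*} (s : Finset α)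
    (F : α → Matrix (Fin n × Fin n) (Fin n × Fin n) ℂ) :
    tensorFirst (fun x => E x) (∑ a ∈ s, F a) = ∑ a ∈ s, tensorFirst (fun x => E x) (F a) := by
  ext p q
  simp only [tensorFirst, Matrix.of_apply, Matrix.sum_apply]
  rw [show (Matrix.of fun i k => ∑ a ∈ s, F a (i, p.2) (k, q.2))
      = ∑ a ∈ s, Matrix.of (fun i k => F a (i, p.2) (k, q.2)) from by
        ext i k; simp [Matrix.sum_apply],
    map_sum]
  simp [Matrix.sum_apply]

lemma tensorFirst_kron (x y : Matrix (Fin n) (Fin n) ℂ) :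
    tensorFirst (fun x => E x) (x ⊗ₖ y) = (E x) ⊗ₖ y := by
  ext p q
  simp only [tensorFirst, Matrix.of_apply, Matrix.kroneckerMap_apply]
  rw [show (Matrix.of fun i k => x i k * y p.2 q.2) = y p.2 q.2 • x from by
        ext i k; simp [mul_comm],
    _root_.map_smul]
  simp [Matrix.smul_apply]
  ring

lemma tensorFirst_comp (T S : Matrix (Fin n) (Fin n) ℂ → Matrix (Fin n) (Fin n) ℂ)
    (W : Matrix (Fin n × Fin n) (Fin n × Fin n) ℂ) :
    tensorFirst T (tensorFirst S W) = tensorFirst (fun x => T (S x)) W := rfl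

lemma tensorFirst_id (W : Matrix (Fin n × Fin n) (Fin n × Fin n) ℂ) :
    tensorFirst (fun x => x) W = W := by
  ext ⟨p1, p2⟩ ⟨q1, q2⟩
  rfl

lemma tensorFirst_inj :
    Function.Injective (tensorFirst (fun x => E.symm x) :
      Matrix (Fin n × Fin n) (Fin n × Fin n) ℂ → Matrix (Fin n × Fin n) (Fin n × Fin n) ℂ) := by
  intro W V h
  have h2 := congrArg (tensorFirst (fun x => E x)) h
  rwa [tensorFirst_comp, tensorFirst_comp,
    show (fun x => E (E.symm x)) = fun x : Matrix (Fin n) (Fin n) ℂ => x from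
      funext fun x => E.apply_symm_apply x, tensorFirst_id, tensorFirst_id] at h2

lemma J0_sum {α : Type*} (s : Finset α) (F : α → Matrix (Fin n × Fin n) (Fin n × Fin n) ℂ) :
    J0map (∑ a ∈ s, F a) = ∑ a ∈ s, J0map (F a) := by
  ext p q
  simp [J0map, Matrix.sum_apply]

lemma J0_smul (c : ℂ) (M : Matrix (Fin n × Fin n) (Fin n × Fin n) ℂ) :
    J0map (c • M) = (starRingEnd ℂ) c • J0map M := by
  ext p q
  simp [J0map]

lemma J0_kron (x y : Matrix (Fin n) (Fin n) ℂ) :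
    J0map (x ⊗ₖ y) = yᴴ ⊗ₖ xᴴ := by
  ext ⟨p1, p2⟩ ⟨q1, q2⟩
  simp [J0map, Matrix.conjTranspose_apply, mul_comm]

lemma J0_J0 (M : Matrix (Fin n × Fin n) (Fin n × Fin n) ℂ) : J0map (J0map M) = M := by
  ext ⟨p1, p2⟩ ⟨q1, q2⟩
  simp [J0map]

variable (hE : ∀ i, E ((f i)ᴴ) = f i)

include hE in
lemma Esymm_f (i : Fin (n ^ 2)) : E.symm (f i) = (f i)ᴴ := by
  rw [LinearEquiv.symm_apply_eq, hE]

include hON hn hE in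
lemma key (W : Matrix (Fin n × Fin n) (Fin n × Fin n) ℂ) :
    J0map (tensorFirst (fun x => E.symm x) W)
      = tensorFirst (fun x => E.symm x) (dmap f (flipT W)) := by
  conv_lhs => rw [← big_expand f hON hn W]
  unfold dmap
  simp only [coeff_flip]
  simp only [tensorFirst_sum, tensorFirst_smul, tensorFirst_kron, J0_sum, J0_smul, J0_kron,
    Esymm_f f E hE, Matrix.conjTranspose_conjTranspose]
  rw [Finset.sum_comm]

lemma eps_apply (i j a b : Fin n) :
    eps i j a b = if i = a ∧ j = b then (1 : ℂ) else 0 := by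
  simp [eps, Matrix.single]

lemma Psi_apply (T : Matrix (Fin n) (Fin n) ℂ → Matrix (Fin n) (Fin n) ℂ)
    (p q : Fin n × Fin n) :
    Psi n T p q = (n : ℂ) * T (eps q.1 p.1) p.2 q.2 := by
  unfold Psi
  simp only [Matrix.smul_apply, Matrix.sum_apply, Matrix.kroneckerMap_apply,
    Matrix.conjTranspose_apply, eps_apply, smul_eq_mul]
  congr 1
  simp only [apply_ite (star : ℂ → ℂ), star_one, star_zero, ite_and, ite_mul, one_mul,
    zero_mul]
  rw [Finset.sum_eq_single q.1]
  · rw [Finset.sum_eq_single p.1]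
    · simp
    · intro b _ hb; simp [hb]
    · simp
  · intro b _ hb; simp [hb]
  · simp

lemma trace_conjT_mul_eps (X : Matrix (Fin n) (Fin n) ℂ) (a b : Fin n) :
    Matrix.trace (Xᴴ * eps a b) = (starRingEnd ℂ) (X a b) := by
  rw [trace_conjT_mul]
  simp only [eps_apply, mul_ite, mul_one, mul_zero, ite_and]
  rw [Finset.sum_eq_single a]
  · rw [Finset.sum_eq_single b]
    · simp
    · intro c _ hc; simp [hc, Ne.symm hc]
    · simp
  · intro c _ hc; simp [hc, Ne.symm hc]
  · simp

lemma adjMap_apply (T : Matrix (Fin n) (Fin n) ℂ → Matrix (Fin n) (Fin n) ℂ)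
    (x : Matrix (Fin n) (Fin n) ℂ) (b d : Fin n) :
    adjMap T x b d = Matrix.trace ((T (eps b d))ᴴ * x) := by
  unfold adjMap
  simp only [Matrix.sum_apply, Matrix.smul_apply, eps_apply, smul_eq_mul, mul_ite, mul_one,
    mul_zero, ite_and]
  rw [Finset.sum_eq_single b]
  · rw [Finset.sum_eq_single d]
    · simp
    · intro c _ hc; simp [hc, Ne.symm hc]
    · simp
  · intro c _ hc; simp [hc, Ne.symm hc]
  · simp

lemma Psi_adjMap (T : Matrix (Fin n) (Fin n) ℂ → Matrix (Fin n) (Fin n) ℂ) :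
    Psi n (adjMap T) = J0map (Psi n T) := by
  ext p q
  rw [Psi_apply, adjMap_apply, trace_conjT_mul_eps]
  show _ = (starRingEnd ℂ) (Psi n T (q.2, q.1) (p.2, p.1))
  rw [Psi_apply]
  simp [_root_.map_mul]

include hn in
lemma exists_T (M : Matrix (Fin n × Fin n) (Fin n × Fin n) ℂ) :
    ∃ T : Matrix (Fin n) (Fin n) ℂ →ₗ[ℂ] Matrix (Fin n) (Fin n) ℂ, Psi n T = M := by
  have hn' : (n : ℂ) ≠ 0 := Nat.cast_ne_zero.mpr hn
  refine ⟨{ toFun := fun x => Matrix.of fun b d =>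
      (n : ℂ)⁻¹ * ∑ i, ∑ j, x i j * M (j, b) (i, d)
            map_add' := ?_
            map_smul' := ?_ }, ?_⟩
  · intro x y
    ext b d
    simp only [Matrix.add_apply, add_mul, Finset.sum_add_distrib, Matrix.of_apply, mul_add]
  · intro c x
    ext b d
    simp only [Matrix.smul_apply, smul_eq_mul, Matrix.of_apply, RingHom.id_apply,
      Finset.mul_sum]
    refine Finset.sum_congr rfl fun i _ => Finset.sum_congr rfl fun j _ => ?_
    ring
  · ext p q
    rw [Psi_apply]
    simp only [LinearMap.coe_mk, AddHom.coe_mk, Matrix.of_apply, eps_apply, ite_mul, one_mul,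
      zero_mul, ite_and]
    rw [Finset.sum_eq_single q.1]
    · rw [Finset.sum_eq_single p.1]
      · rw [← mul_assoc, mul_inv_cancel₀ hn', one_mul]; simp
      · intro c _ hc; simp [hc, Ne.symm hc]
      · simp
    · intro c _ hc; simp [hc, Ne.symm hc]
    · simp

theorem pseudo_graph_symmetry_tfae' {n : ℕ}
    (f : Fin (n ^ 2) → Matrix (Fin n) (Fin n) ℂ)
    (hON : ∀ i j, Matrix.trace ((f i)ᴴ * f j) / (n : ℂ) = if i = j then 1 else 0)
    (D : Matrix (Fin n) (Fin n) ℂ ≃ₗ[ℂ] Matrix (Fin n) (Fin n) ℂ)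
    (hD : ∀ i, D ((f i)ᴴ) = f i)
    (𝒲 : Submodule ℂ (Matrix (Fin n × Fin n) (Fin n × Fin n) ℂ)) :
    (((fun W => dmap f (flipT W)) '' (𝒲 : Set _) = (𝒲 : Set _)) ↔
      (J0map '' (tensorFirst (fun x => D.symm x) '' (𝒲 : Set _)) =
        tensorFirst (fun x => D.symm x) '' (𝒲 : Set _))) ∧
    (((fun W => dmap f (flipT W)) '' (𝒲 : Set _) = (𝒲 : Set _)) ↔
      (∀ T : Matrix (Fin n) (Fin n) ℂ →ₗ[ℂ] Matrix (Fin n) (Fin n) ℂ,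
        Psi n T ∈ tensorFirst (fun x => D.symm x) '' (𝒲 : Set _) →
        Psi n (adjMap T) ∈ tensorFirst (fun x => D.symm x) '' (𝒲 : Set _))) := by
  rcases Nat.eq_zero_or_pos n with h0 | hpos
  · subst h0
    have hall : ∀ x y : Matrix (Fin 0 × Fin 0) (Fin 0 × Fin 0) ℂ, x = y := by
      intro x y; ext p q; exact p.1.elim0
    have h𝒲 : (𝒲 : Set (Matrix (Fin 0 × Fin 0) (Fin 0 × Fin 0) ℂ)) = Set.univ :=
      Set.eq_univ_of_forall fun x => by rw [hall x 0]; exact 𝒲.zero_mem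
    have himg : ∀ (g : Matrix (Fin 0 × Fin 0) (Fin 0 × Fin 0) ℂ →
        Matrix (Fin 0 × Fin 0) (Fin 0 × Fin 0) ℂ)
        (S : Set (Matrix (Fin 0 × Fin 0) (Fin 0 × Fin 0) ℂ)),
        S = Set.univ → g '' S = Set.univ := by
      intro g S hS
      rw [hS]
      exact Set.eq_univ_of_forall fun x => ⟨x, trivial, hall _ _⟩
    have hU := himg (tensorFirst (fun x => D.symm x)) _ h𝒲
    have hJ := himg J0map _ hU
    have hd := himg (fun W => dmap f (flipT W)) _ h𝒲
    refine ⟨?_, ?_⟩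
    · rw [hd, hJ, hU, h𝒲]
    · rw [hd, h𝒲]
      constructor
      · intro _ T _
        exact ⟨0, trivial, hall _ _⟩
      · intro _; rfl
  · have hn : n ≠ 0 := hpos.ne'
    have hpart1 : ((fun W => dmap f (flipT W)) '' (𝒲 : Set _) = (𝒲 : Set _)) ↔
        (J0map '' (tensorFirst (fun x => D.symm x) '' (𝒲 : Set _)) =
          tensorFirst (fun x => D.symm x) '' (𝒲 : Set _)) := by
      have h1 : J0map '' (tensorFirst (fun x => D.symm x) '' (𝒲 : Set _))
          = tensorFirst (fun x => D.symm x) '' ((fun W => dmap f (flipT W)) '' (𝒲 : Set _)) := by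
        rw [Set.image_image, Set.image_image]
        exact Set.image_congr fun w _ => key f hON hn D hD w
      rw [h1]
      exact (Set.image_eq_image (tensorFirst_inj D)).symm
    refine ⟨hpart1, hpart1.trans ?_⟩
    constructor
    · intro hJ T hT
      rw [Psi_adjMap, ← hJ]
      exact Set.mem_image_of_mem _ hT
    · intro hsa
      apply Set.Subset.antisymm
      · rintro _ ⟨w, hw, rfl⟩
        obtain ⟨T, hT⟩ := exists_T hn w
        rw [← hT, ← Psi_adjMap]
        exact hsa T (by rw [hT]; exact hw)
      · intro u hu
        obtain ⟨T, hT⟩ := exists_T hn u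
        have h2 : J0map u ∈ tensorFirst (fun x => D.symm x) '' (𝒲 : Set _) := by
          rw [← hT, ← Psi_adjMap]
          exact hsa T (by rw [hT]; exact hu)
        exact ⟨J0map u, h2, J0_J0 u⟩

/-- For a subspace `𝒲 ⊆ L²(M_n) ⊗ L²(M_n)` and
`𝒰 = (∂^{-1} ⊗ 1)(𝒲)`, the conditions `(𝔡∘𝔣)(𝒲) = 𝒲`, `J₀(𝒰) = 𝒰` and
"`Ψ^{-1}(𝒰)` is self-adjoint" are equivalent. -/
theorem pseudo_graph_symmetry_tfae {n : ℕ}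
    (f : Fin (n ^ 2) → Matrix (Fin n) (Fin n) ℂ)
    (hON : ∀ i j, Matrix.trace ((f i)ᴴ * f j) / (n : ℂ) = if i = j then 1 else 0)
    (D : Matrix (Fin n) (Fin n) ℂ ≃ₗ[ℂ] Matrix (Fin n) (Fin n) ℂ)
    (hD : ∀ i, D ((f i)ᴴ) = f i)
    (𝒲 : Submodule ℂ (Matrix (Fin n × Fin n) (Fin n × Fin n) ℂ)) :
    (((fun W => dmap f (flipT W)) '' (𝒲 : Set _) = (𝒲 : Set _)) ↔
      (J0map '' (tensorFirst (fun x => D.symm x) '' (𝒲 : Set _)) =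
        tensorFirst (fun x => D.symm x) '' (𝒲 : Set _))) ∧
    (((fun W => dmap f (flipT W)) '' (𝒲 : Set _) = (𝒲 : Set _)) ↔
      (∀ T : Matrix (Fin n) (Fin n) ℂ →ₗ[ℂ] Matrix (Fin n) (Fin n) ℂ,
        Psi n T ∈ tensorFirst (fun x => D.symm x) '' (𝒲 : Set _) →
        Psi n (adjMap T) ∈ tensorFirst (fun x => D.symm x) '' (𝒲 : Set _))) := by
  exact pseudo_graph_symmetry_tfae' f hON D hD 𝒲
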